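/- Let n be a positive integer, m a divisor of n, a and b integers with 0 ≤ a,b < n/m, and c an integer with 0 ≤ c < m and gcd(c,m) = 1. Let ρ_{a,b,c} be the m-dimensional representation of H(n) defined by (ρ_{a,b,c}(x,y,z)f)(j) = e^{2πi·m(ax̃+bỹ)/n}·e^{2πi·c(ȳj+z̄)/m}·f(j+x̄) on functions f : ℤ/mℤ → ℂ (bars denoting reduction mod m). Then its character χ_{a,b,c}(x,y,z) = trace(ρ_{a,b,c}(x,y,z)) satisfies: χ_{a,b,c}(x,y,z) = 0 unless both x and y lie in the subgroup m·(ℤ/nℤ) of ℤ/nℤ, and in that case χ_{a,b,c}(x,y,z) = m·e^{2πi·m(ax̃+bỹ)/n}·e^{2πi·c·z̄/m}. -/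

import Mathlib

open scoped BigOperators

/-- The Heisenberg group mod `n`, as triples `(x, y, z)` of elements of `ℤ/nℤ`. -/
abbrev Heis (n : ℕ) := ZMod n × ZMod n × ZMod n

/-- The representation `ρ_{a,b,c}` of `H(n)` on functions `f : ℤ/mℤ → ℂ`:
`(ρ_{a,b,c}(x,y,z)f)(j) = e^{2πi·m(a·x̃+b·ỹ)/n}·e^{2πi·c(ȳ·j+z̄)/m}·f(j+x̄)`,
where `x̃, ỹ` are integer representatives of `x, y`, and bars denote reduction
mod `m` (well defined since `m ∣ n`). -/
noncomputable def heisRep (n m : ℕ) (hm : m ∣ n) (a b c : ℕ) (g : Heis n)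
    (f : ZMod m → ℂ) : ZMod m → ℂ := fun j =>
  Complex.exp (2 * (Real.pi : ℂ) * Complex.I *
      ((m : ℂ) * ((a : ℂ) * ((g.1.val : ℕ) : ℂ) + (b : ℂ) * ((g.2.1.val : ℕ) : ℂ))) /
      (n : ℂ)) *
    Complex.exp (2 * (Real.pi : ℂ) * Complex.I *
      ((c : ℂ) *
        (((ZMod.castHom hm (ZMod m) g.2.1 * j + ZMod.castHom hm (ZMod m) g.2.2).val : ℕ) : ℂ)) /
      (m : ℂ)) *
    f (j + ZMod.castHom hm (ZMod m) g.1)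

lemma cast_eq_zero_iff' (n m : ℕ) [NeZero m] (hn : 0 < n) (hm : m ∣ n) (x : ZMod n) :
    (∃ u : ZMod n, x = (m : ZMod n) * u) ↔ ZMod.castHom hm (ZMod m) x = 0 := by
  haveI : NeZero n := ⟨hn.ne'⟩
  constructor
  · rintro ⟨u, rfl⟩
    rw [map_mul, map_natCast, ZMod.natCast_self, zero_mul]
  · intro h
    rw [ZMod.castHom_apply, ZMod.cast_eq_val] at h
    have h2 : (m : ℕ) ∣ x.val := (ZMod.natCast_eq_zero_iff x.val m).mp h
    obtain ⟨k, hk⟩ := h2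
    refine ⟨(k : ZMod n), ?_⟩
    have : x = ((x.val : ℕ) : ZMod n) := (ZMod.natCast_zmod_val x).symm
    rw [this, hk]; push_cast; ring

lemma exp_val_eq_stdAddChar (m : ℕ) [NeZero m] (c : ℕ) (w : ZMod m) :
    Complex.exp (2 * (Real.pi : ℂ) * Complex.I * ((c : ℂ) * ((w.val : ℕ) : ℂ)) / (m : ℂ))
      = ZMod.stdAddChar ((c : ZMod m) * w) := by
  have h := ZMod.stdAddChar_coe (N := m) ((c * w.val : ℕ) : ℤ)
  have h2 : (((c * w.val : ℕ) : ℤ) : ZMod m) = (c : ZMod m) * w := by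
    push_cast
    rw [ZMod.natCast_zmod_val]
  rw [h2] at h
  rw [h]
  push_cast
  ring_nf

/-- The character `χ_{a,b,c}(x,y,z) = trace(ρ_{a,b,c}(x,y,z))`, computed in the basis of
delta functions: `trace = ∑_j (ρ_{a,b,c}(g)(δ_j))(j)`. It vanishes unless both `x` and
`y` lie in the subgroup `m·(ℤ/nℤ)`, in which case it equals
`m·e^{2πi·m(a·x̃+b·ỹ)/n}·e^{2πi·c·z̄/m}`. -/
theorem heisRep_character (n m : ℕ) [NeZero m] (hn : 0 < n) (hm : m ∣ n) (a b c : ℕ)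
    (ha : a < n / m) (hb : b < n / m) (hc : c < m) (hcm : Nat.gcd c m = 1)
    (g : Heis n) :
    (((∃ u : ZMod n, g.1 = (m : ZMod n) * u) ∧ (∃ v : ZMod n, g.2.1 = (m : ZMod n) * v)) →
      ∑ j : ZMod m, heisRep n m hm a b c g (Pi.single j 1) j =
        (m : ℂ) *
          Complex.exp (2 * (Real.pi : ℂ) * Complex.I *
            ((m : ℂ) * ((a : ℂ) * ((g.1.val : ℕ) : ℂ) + (b : ℂ) * ((g.2.1.val : ℕ) : ℂ))) /
            (n : ℂ)) *
          Complex.exp (2 * (Real.pi : ℂ) * Complex.I *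
            ((c : ℂ) * (((ZMod.castHom hm (ZMod m) g.2.2).val : ℕ) : ℂ)) / (m : ℂ))) ∧
    (¬ ((∃ u : ZMod n, g.1 = (m : ZMod n) * u) ∧ (∃ v : ZMod n, g.2.1 = (m : ZMod n) * v)) →
      ∑ j : ZMod m, heisRep n m hm a b c g (Pi.single j 1) j = 0) := by
  set x' := ZMod.castHom hm (ZMod m) g.1 with hx'
  set y' := ZMod.castHom hm (ZMod m) g.2.1 with hy'
  set z' := ZMod.castHom hm (ZMod m) g.2.2 with hz'
  set E1 := Complex.exp (2 * (Real.pi : ℂ) * Complex.I *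
      ((m : ℂ) * ((a : ℂ) * ((g.1.val : ℕ) : ℂ) + (b : ℂ) * ((g.2.1.val : ℕ) : ℂ))) /
      (n : ℂ)) with hE1
  have hterm : ∀ j : ZMod m, heisRep n m hm a b c g (Pi.single j 1) j =
      E1 * ZMod.stdAddChar ((c : ZMod m) * (y' * j + z')) * (if x' = 0 then 1 else 0) := by
    intro j
    rw [heisRep, exp_val_eq_stdAddChar]
    congr 1
    rw [Pi.single_apply]
    simp only [add_eq_left]
    rfl
  -- unit c
  have hcu : IsUnit (c : ZMod m) := (ZMod.isUnit_iff_coprime c m).mpr hcm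
  constructor
  · rintro ⟨hxu, hyv⟩
    have hx0 : x' = 0 := (cast_eq_zero_iff' n m hn hm g.1).mp hxu
    have hy0 : y' = 0 := (cast_eq_zero_iff' n m hn hm g.2.1).mp hyv
    have : ∀ j : ZMod m, heisRep n m hm a b c g (Pi.single j 1) j =
        E1 * ZMod.stdAddChar ((c : ZMod m) * z') := by
      intro j
      rw [hterm j, hy0, hx0]
      simp
    rw [Finset.sum_congr rfl (fun j _ => this j), Finset.sum_const]
    rw [exp_val_eq_stdAddChar]
    simp [ZMod.card]
    ring
  · intro hnot
    by_cases hx0 : x' = 0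
    · have hxu : ∃ u : ZMod n, g.1 = (m : ZMod n) * u :=
        (cast_eq_zero_iff' n m hn hm g.1).mpr hx0
      have hy0 : y' ≠ 0 := by
        intro h
        exact hnot ⟨hxu, (cast_eq_zero_iff' n m hn hm g.2.1).mpr h⟩
      have hcy : (c : ZMod m) * y' ≠ 0 := fun h => hy0 (by
        have := hcu.mul_right_eq_zero.mp h
        exact this)
      have hsum : ∑ j : ZMod m, ZMod.stdAddChar ((c : ZMod m) * y' * j) = 0 := by
        have hne : (ZMod.stdAddChar (N := m)).mulShift ((c : ZMod m) * y') ≠ 1 :=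
          ZMod.isPrimitive_stdAddChar m hcy
        have := AddChar.sum_eq_zero_of_ne_one hne
        simpa [AddChar.mulShift_apply, mul_comm] using this
      calc ∑ j : ZMod m, heisRep n m hm a b c g (Pi.single j 1) j
          = ∑ j : ZMod m, E1 * ZMod.stdAddChar ((c : ZMod m) * z') *
              ZMod.stdAddChar ((c : ZMod m) * y' * j) := by
            refine Finset.sum_congr rfl (fun j _ => ?_)
            rw [hterm j, hx0]
            have : (c : ZMod m) * (y' * j + z') = (c : ZMod m) * y' * j + (c : ZMod m) * z' := by
              ring
            rw [this, AddChar.map_add_eq_mul]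
            simp
            ring
        _ = E1 * ZMod.stdAddChar ((c : ZMod m) * z') *
              ∑ j : ZMod m, ZMod.stdAddChar ((c : ZMod m) * y' * j) := by
            rw [Finset.mul_sum]
        _ = 0 := by rw [hsum, mul_zero]
    · refine Finset.sum_eq_zero (fun j _ => ?_)
      rw [hterm j]
      simp [hx0]
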